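/- arXiv:1202.1411 — 3 statements merged into one kernel-verified Lean document; each statement's English description precedes it below -/
import Mathlib

section
/- Let N : ℝⁿ → ℝ^{n×n} be a linear map satisfying xᵀN(x)x = 0 for all x ∈ ℝⁿ. Let A ∈ ℝ^{n×n}, and for d ∈ ℝⁿ define A_d x := Ax + N(x)d + N(d)x. Suppose there exist d ∈ ℝⁿ and α > 0 such that vᵀ(A_d)v ≤ -α‖v‖² for all v. Then for any r ≥ (1/α)‖Ad + N(d)d‖₂, the closed ball B_r(d) is invariant for the ODE ẋ = Ax + N(x)x: if x(t₀) ∈ B_r(d), then x(t) ∈ B_r(d) for all t ≥ t₀. -/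
open Matrix

/-- Euclidean norm on `Fin n → ℝ`. -/
noncomputable def eucNorm {n : ℕ} (v : Fin n → ℝ) : ℝ := Real.sqrt (∑ i, v i ^ 2)

lemma enorm_nonneg' {n : ℕ} (v : Fin n → ℝ) : 0 ≤ eucNorm v := Real.sqrt_nonneg _

lemma enorm_sq' {n : ℕ} (v : Fin n → ℝ) : eucNorm v ^ 2 = ∑ i, v i ^ 2 :=
  Real.sq_sqrt (Finset.sum_nonneg fun i _ => sq_nonneg _)

lemma dot_le_enorm_mul_enorm {n : ℕ} (v w : Fin n → ℝ) : v ⬝ᵥ w ≤ eucNorm v * eucNorm w := by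
  have h := Finset.sum_mul_sq_le_sq_mul_sq Finset.univ v w
  calc v ⬝ᵥ w ≤ |v ⬝ᵥ w| := le_abs_self _
    _ = Real.sqrt ((v ⬝ᵥ w) ^ 2) := (Real.sqrt_sq_eq_abs _).symm
    _ ≤ Real.sqrt ((∑ i, v i ^ 2) * (∑ i, w i ^ 2)) := Real.sqrt_le_sqrt h
    _ = eucNorm v * eucNorm w := Real.sqrt_mul (Finset.sum_nonneg fun i _ => sq_nonneg _) _

/-- Invariance of the ball `B_r(d)` for `ẋ = Ax + N(x)x` under `A_d + αI ⪯ 0`. -/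
theorem stmt0 {n : ℕ} (A : Matrix (Fin n) (Fin n) ℝ)
    (N : (Fin n → ℝ) →ₗ[ℝ] Matrix (Fin n) (Fin n) ℝ)
    (hN : ∀ x : Fin n → ℝ, x ⬝ᵥ (N x).mulVec x = 0)
    (d : Fin n → ℝ) (α : ℝ) (hα : 0 < α)
    (hAd : ∀ v : Fin n → ℝ,
      v ⬝ᵥ (A.mulVec v + (N v).mulVec d + (N d).mulVec v) ≤ -α * eucNorm v ^ 2)
    (r : ℝ) (hr : (1 / α) * eucNorm (A.mulVec d + (N d).mulVec d) ≤ r)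
    (x : ℝ → Fin n → ℝ)
    (hx : ∀ t : ℝ, HasDerivAt x (A.mulVec (x t) + (N (x t)).mulVec (x t)) t)
    (t₀ : ℝ) (hx0 : eucNorm (x t₀ - d) ≤ r) :
    ∀ t : ℝ, t₀ ≤ t → eucNorm (x t - d) ≤ r := by
  set c := eucNorm (A.mulVec d + (N d).mulVec d) with hc_def
  have hc0 : 0 ≤ c := enorm_nonneg' _
  have hcr : c ≤ α * r := by
    rw [one_div] at hr
    calc c = α * (α⁻¹ * c) := by field_simp
    _ ≤ α * r := by nlinarith
  have hr0 : 0 ≤ r := le_trans (by positivity) hr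
  -- the squared distance function and its derivative
  set f : ℝ → ℝ := fun s => ∑ i, (x s i - d i) ^ 2 with hf_def
  set f' : ℝ → ℝ := fun s =>
    ∑ i, 2 * (x s i - d i) * (A.mulVec (x s) + (N (x s)).mulVec (x s)) i with hf'_def
  have hderiv : ∀ s, HasDerivAt f (f' s) s := by
    intro s
    apply HasDerivAt.fun_sum
    intro i _
    have hxi : HasDerivAt (fun t => x t i)
        ((A.mulVec (x s) + (N (x s)).mulVec (x s)) i) s := hasDerivAt_pi.1 (hx s) i
    have := ((hxi.sub_const (d i)).fun_pow 2)
    simpa [mul_comm, mul_assoc, mul_left_comm] using this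
  have hfsq : ∀ s, f s = eucNorm (x s - d) ^ 2 := by
    intro s
    rw [enorm_sq']
    simp [hf_def, Pi.sub_apply]
  -- key derivative bound
  have hbound : ∀ s, f' s ≤ 2 * (-α * eucNorm (x s - d) ^ 2 + eucNorm (x s - d) * c) := by
    intro s
    set e : Fin n → ℝ := x s - d with he_def
    have hxs : x s = e + d := by simp [he_def]
    have hdot : f' s = 2 * (e ⬝ᵥ (A.mulVec (x s) + (N (x s)).mulVec (x s))) := by
      rw [hf'_def]
      simp only [dotProduct, Finset.mul_sum]
      apply Finset.sum_congr rfl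
      intro i _
      simp [he_def, Pi.sub_apply]
      ring
    have hexp : e ⬝ᵥ (A.mulVec (x s) + (N (x s)).mulVec (x s))
        = e ⬝ᵥ (A.mulVec e + (N e).mulVec d + (N d).mulVec e)
          + e ⬝ᵥ (A.mulVec d + (N d).mulVec d) := by
      rw [hxs, map_add]
      simp only [Matrix.mulVec_add, Matrix.add_mulVec, dotProduct_add]
      have h0 : e ⬝ᵥ (N e).mulVec e = 0 := hN e
      ring_nf
      rw [h0]
      ring
    have h1 : e ⬝ᵥ (A.mulVec e + (N e).mulVec d + (N d).mulVec e) ≤ -α * eucNorm e ^ 2 := hAd e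
    have h2 : e ⬝ᵥ (A.mulVec d + (N d).mulVec d) ≤ eucNorm e * c :=
      dot_le_enorm_mul_enorm _ _
    rw [hdot, hexp]
    nlinarith
  intro t ht
  -- reduce to: for every ε > 0, eucNorm (x t - d) ≤ r + ε
  have key : ∀ ε : ℝ, 0 < ε → eucNorm (x t - d) ≤ r + ε := by
    intro ε hε
    have hball : ∀ s ∈ Set.Icc t₀ t, f s ≤ (r + ε) ^ 2 := by
      apply image_le_of_deriv_right_lt_deriv_boundary
        (f' := f') (B := fun _ => (r + ε) ^ 2) (B' := fun _ => (0 : ℝ))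
      case hf => exact fun s _ => (hderiv s).continuousAt.continuousWithinAt
      case hf' => exact fun s _ => (hderiv s).hasDerivWithinAt
      case ha =>
        rw [hfsq]
        have : eucNorm (x t₀ - d) ≤ r + ε := by linarith
        exact pow_le_pow_left₀ (enorm_nonneg' _) this 2
      case hB => exact fun s => hasDerivAt_const _ _
      case bound =>
        intro s _ hfs
        have hnorm : eucNorm (x s - d) = r + ε := by
          have := (hfsq s).symm.trans hfs
          nlinarith [enorm_nonneg' (x s - d), hr0, hε]
        have hb := hbound s
        rw [hnorm] at hb
        have hre : (0:ℝ) < r + ε := by linarith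
        have h3 : (r + ε) * c ≤ (r + ε) * (α * r) :=
          mul_le_mul_of_nonneg_left hcr (le_of_lt hre)
        nlinarith [mul_pos (mul_pos hα hε) hre]
    have hft : f t ≤ (r + ε) ^ 2 := hball t ⟨ht, le_refl t⟩
    rw [hfsq t] at hft
    nlinarith [enorm_nonneg' (x t - d), hr0, hε]
  exact le_of_forall_pos_le_add key
end

section
/- Let V(e) = eᵀPe with α₁I ⪯ P ⪯ α₂I for some α₁, α₂ > 0, and suppose along trajectories V̇(e) ≤ (−α₃ + 2γα₂‖e‖₂)‖e‖₂² for some α₃, γ > 0. If ‖e(0)‖₂ < (α₃/(2γα₂))√(α₁/α₂), then ‖e(t)‖₂ ≤ ρ·exp(−εt/(2α₂)) for suitable ρ > 0 and ε ∈ (0, α₃), and in particular e(t) → 0 as t → ∞. -/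
open Matrix

set_option maxHeartbeats 1000000
lemma abs_le_enorm' {n : ℕ} (v : Fin n → ℝ) (i : Fin n) : |v i| ≤ eucNorm v := by
  have h : v i ^ 2 ≤ ∑ j, v j ^ 2 :=
    Finset.single_le_sum (f := fun j => v j ^ 2) (fun j _ => sq_nonneg _) (Finset.mem_univ i)
  calc |v i| = Real.sqrt (v i ^ 2) := (Real.sqrt_sq_eq_abs _).symm
    _ ≤ eucNorm v := Real.sqrt_le_sqrt h

/-- Lyapunov decay: if `V(e) = eᵀPe` with `α₁I ⪯ P ⪯ α₂I` satisfies
`V̇ ≤ (−α₃ + 2γα₂‖e‖)‖e‖²` along the trajectory and `‖e(0)‖` is small enough, then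
`‖e(t)‖ ≤ ρ e^{−εt/(2α₂)}` for some `ρ > 0` and `ε ∈ (0, α₃)`; in particular `e(t) → 0`. -/
theorem stmt9 {n : ℕ}
    (P : Matrix (Fin n) (Fin n) ℝ) (hPsymm : P.IsSymm)
    (α₁ α₂ α₃ γ : ℝ) (hα₁ : 0 < α₁) (hα₂ : 0 < α₂) (hα₃ : 0 < α₃) (hγ : 0 < γ)
    (hP : ∀ v : Fin n → ℝ,
      α₁ * eucNorm v ^ 2 ≤ v ⬝ᵥ P.mulVec v ∧ v ⬝ᵥ P.mulVec v ≤ α₂ * eucNorm v ^ 2)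
    (e : ℝ → Fin n → ℝ)
    (he : ∀ t : ℝ, DifferentiableAt ℝ e t)
    (hV : ∀ t : ℝ, 0 ≤ t →
      deriv (fun s => e s ⬝ᵥ P.mulVec (e s)) t
        ≤ (-α₃ + 2 * γ * α₂ * eucNorm (e t)) * eucNorm (e t) ^ 2)
    (hinit : eucNorm (e 0) < α₃ / (2 * γ * α₂) * Real.sqrt (α₁ / α₂)) :
    (∃ ρ : ℝ, 0 < ρ ∧ ∃ ε : ℝ, ε ∈ Set.Ioo 0 α₃ ∧
        ∀ t : ℝ, 0 ≤ t → eucNorm (e t) ≤ ρ * Real.exp (-(ε * t) / (2 * α₂))) ∧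
      Filter.Tendsto e Filter.atTop (nhds 0) := by
  set N : ℝ → ℝ := fun t => eucNorm (e t) with hNdef
  set V : ℝ → ℝ := fun s => e s ⬝ᵥ P.mulVec (e s) with hVdef
  have hN0 : ∀ t, 0 ≤ N t := fun t => enorm_nonneg' _
  have hVlow : ∀ t, α₁ * N t ^ 2 ≤ V t := fun t => (hP (e t)).1
  have hVhigh : ∀ t, V t ≤ α₂ * N t ^ 2 := fun t => (hP (e t)).2
  -- differentiability and continuity of V
  have hVdiff : ∀ t, DifferentiableAt ℝ V t := by
    intro t
    have hei : ∀ i, DifferentiableAt ℝ (fun s => e s i) t := fun i =>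
      (differentiableAt_pi.mp (he t)) i
    have : V = fun s => ∑ i, e s i * ∑ j, P i j * e s j := by
      funext s
      simp [hVdef, dotProduct, Matrix.mulVec, dotProduct]
    rw [this]
    apply DifferentiableAt.fun_sum
    intro i _
    exact (hei i).mul (DifferentiableAt.fun_sum fun j _ => ((hei j).const_mul _))
  have hVcont : Continuous V :=
    continuous_iff_continuousAt.mpr fun t => (hVdiff t).continuousAt
  -- choice of ε
  have hs : (0:ℝ) < Real.sqrt (α₁ / α₂) := Real.sqrt_pos.mpr (by positivity)
  set s : ℝ := Real.sqrt (α₁ / α₂) with hsdef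
  have hs2 : s ^ 2 = α₁ / α₂ := Real.sq_sqrt (by positivity)
  have hq : 2 * γ * α₂ * N 0 / s < α₃ := by
    rw [div_lt_iff₀ hs]
    have := hinit
    rw [div_mul_eq_mul_div, lt_div_iff₀ (by positivity)] at this
    nlinarith [this]
  have hqnn : 0 ≤ 2 * γ * α₂ * N 0 / s :=
    div_nonneg (mul_nonneg (by positivity) (hN0 0)) hs.le
  set ε : ℝ := (α₃ - 2 * γ * α₂ * N 0 / s) / 2 with hεdef
  have hεpos : 0 < ε := by simp only [hεdef]; linarith
  have hεlt : ε < α₃ := by simp only [hεdef]; linarith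
  set ρ₀ : ℝ := (α₃ - ε) / (2 * γ * α₂) with hρ₀def
  have hρ₀pos : 0 < ρ₀ := div_pos (by linarith) (by positivity)
  have hρ₀eq : 2 * γ * α₂ * ρ₀ = α₃ - ε := by
    rw [hρ₀def]; field_simp
  -- the initial point is inside the invariant ball
  have hN0lt : N 0 < ρ₀ * s := by
    have h1 : 2 * γ * α₂ * N 0 / s < α₃ - ε := by
      simp only [hεdef]; linarith
    rw [div_lt_iff₀ hs] at h1
    have h2 : 2 * γ * α₂ * N 0 < 2 * γ * α₂ * (ρ₀ * s) := by
      rw [← mul_assoc, hρ₀eq]; linarith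
    exact lt_of_mul_lt_mul_left h2 (by positivity)
  set c : ℝ := α₁ * ρ₀ ^ 2 with hcdef
  have hV0lt : V 0 < c := by
    have h1 : α₂ * N 0 ^ 2 < α₂ * (ρ₀ * s) ^ 2 := by
      have hb : 0 < ρ₀ * s := mul_pos hρ₀pos hs
      nlinarith [mul_pos hα₂ (mul_pos (sub_pos.mpr hN0lt) (by linarith [hN0 0] : (0:ℝ) < ρ₀ * s + N 0))]
    have h2 : α₂ * (ρ₀ * s) ^ 2 = c := by
      rw [hcdef, mul_pow, hs2]; field_simp
    calc V 0 ≤ α₂ * N 0 ^ 2 := hVhigh 0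
      _ < α₂ * (ρ₀ * s) ^ 2 := h1
      _ = c := h2
  -- invariance: V stays below c
  have hNle : ∀ t, V t < c → N t ≤ ρ₀ := by
    intro t ht
    rw [hcdef] at ht
    by_contra hco
    push_neg at hco
    nlinarith [hVlow t, mul_pos hα₁ (mul_pos (sub_pos.mpr hco) (by linarith [hN0 t] : (0:ℝ) < N t + ρ₀))]
  have hderiv_le : ∀ t, 0 ≤ t → N t ≤ ρ₀ → deriv V t ≤ -ε * N t ^ 2 := by
    intro t ht hρ
    have h1 := hV t ht
    have h2 : -α₃ + 2 * γ * α₂ * N t ≤ -ε := by nlinarith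
    calc deriv V t ≤ (-α₃ + 2 * γ * α₂ * N t) * N t ^ 2 := h1
      _ ≤ -ε * N t ^ 2 := by nlinarith [sq_nonneg (N t)]
  have hinv : ∀ t, 0 ≤ t → V t < c := by
    by_contra hcon
    push_neg at hcon
    obtain ⟨t₁, ht₁0, ht₁c⟩ := hcon
    set S : Set ℝ := {t | 0 ≤ t ∧ c ≤ V t} with hSdef
    have hSne : S.Nonempty := ⟨t₁, ht₁0, ht₁c⟩
    have hSbdd : BddBelow S := ⟨0, fun x hx => hx.1⟩
    have hSclosed : IsClosed S := by
      have : S = Set.Ici 0 ∩ V ⁻¹' Set.Ici c := by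
        ext x; simp [hSdef, Set.mem_Ici]
      rw [this]
      exact isClosed_Ici.inter (isClosed_Ici.preimage hVcont)
    set t₀ : ℝ := sInf S with ht₀def
    have ht₀mem : t₀ ∈ S := hSclosed.csInf_mem hSne hSbdd
    have ht₀pos : 0 < t₀ := by
      rcases lt_or_eq_of_le ht₀mem.1 with h | h
      · exact h
      · exfalso; rw [← h] at ht₀mem; linarith [ht₀mem.2, hV0lt]
    have hlt : ∀ x, 0 ≤ x → x < t₀ → V x < c := by
      intro x hx hxt
      by_contra hle
      push_neg at hle
      exact absurd (csInf_le hSbdd (⟨hx, hle⟩ : x ∈ S)) (not_le.mpr hxt)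
    have hAnti : AntitoneOn V (Set.Icc 0 t₀) := by
      apply antitoneOn_of_deriv_nonpos (convex_Icc 0 t₀) hVcont.continuousOn
        (fun x _ => (hVdiff x).differentiableWithinAt)
      intro x hx
      rw [interior_Icc] at hx
      have hVx : V x < c := hlt x hx.1.le hx.2
      have := hderiv_le x hx.1.le (hNle x hVx)
      nlinarith [sq_nonneg (N x)]
    have : V t₀ ≤ V 0 :=
      hAnti (Set.left_mem_Icc.mpr ht₀pos.le) ⟨ht₀pos.le, le_rfl⟩ ht₀pos.le
    linarith [ht₀mem.2, hV0lt]
  -- Grönwall: exponential decay of V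
  set k : ℝ := ε / α₂ with hkdef
  have hkpos : 0 < k := div_pos hεpos hα₂
  set g : ℝ → ℝ := fun t => V t * Real.exp (k * t) with hgdef
  have hexp : ∀ x : ℝ, HasDerivAt (fun t => Real.exp (k * t)) (Real.exp (k * x) * k) x := by
    intro x
    have h1 : HasDerivAt (fun t : ℝ => k * t) k x := by
      simpa using (hasDerivAt_id x).const_mul k
    exact (Real.hasDerivAt_exp (k * x)).comp x h1
  have hgderiv : ∀ x : ℝ, deriv g x = deriv V x * Real.exp (k * x) + V x * (Real.exp (k * x) * k) := by
    intro x
    exact ((hVdiff x).hasDerivAt.mul (hexp x)).deriv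
  have hAnti2 : AntitoneOn g (Set.Ici 0) := by
    have hgcont : Continuous g := by
      rw [hgdef]
      exact hVcont.mul (Real.continuous_exp.comp (continuous_const.mul continuous_id))
    have hgdiff : ∀ x : ℝ, DifferentiableAt ℝ g x := by
      intro x
      rw [hgdef]
      exact (hVdiff x).mul (hexp x).differentiableAt
    apply antitoneOn_of_deriv_nonpos (convex_Ici 0) hgcont.continuousOn
      (fun x _ => (hgdiff x).differentiableWithinAt)
    intro x hx
    rw [interior_Ici] at hx
    have hx0 : (0:ℝ) ≤ x := hx.le
    have hVx : V x < c := hinv x hx0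
    have hd := hderiv_le x hx0 (hNle x hVx)
    have hb : -ε * N x ^ 2 ≤ -k * V x := by
      have h1 : V x ≤ α₂ * N x ^ 2 := hVhigh x
      have h2 : k * α₂ = ε := by rw [hkdef]; field_simp
      nlinarith [hkpos]
    rw [hgderiv x]
    have hE : 0 < Real.exp (k * x) := Real.exp_pos _
    nlinarith [hE, hd, hb]
  have hVbound : ∀ t, 0 ≤ t → V t ≤ V 0 * Real.exp (-(k * t)) := by
    intro t ht
    have h1 : g t ≤ g 0 := hAnti2 (Set.mem_Ici.mpr le_rfl) (Set.mem_Ici.mpr ht) ht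
    have h0 : g 0 = V 0 := by simp [hgdef]
    have h2 : V t * Real.exp (k * t) ≤ V 0 := by rw [hgdef] at h1; simpa [h0] using h1
    calc V t = V t * Real.exp (k * t) * Real.exp (-(k * t)) := by
          rw [mul_assoc, ← Real.exp_add]; simp
      _ ≤ V 0 * Real.exp (-(k * t)) :=
          mul_le_mul_of_nonneg_right h2 (Real.exp_pos _).le
  -- conclusion
  have hV0nn : 0 ≤ V 0 := le_trans (mul_nonneg hα₁.le (sq_nonneg _)) (hVlow 0)
  set ρ : ℝ := Real.sqrt (V 0 / α₁) + 1 with hρdef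
  have hρpos : 0 < ρ := by positivity
  have hρsq : V 0 ≤ α₁ * ρ ^ 2 := by
    have h1 : Real.sqrt (V 0 / α₁) ^ 2 = V 0 / α₁ := Real.sq_sqrt (div_nonneg hV0nn hα₁.le)
    have h2 : V 0 / α₁ ≤ ρ ^ 2 := by
      rw [hρdef]; nlinarith [Real.sqrt_nonneg (V 0 / α₁)]
    rw [div_le_iff₀ hα₁] at h2; linarith
  have hmain : ∀ t : ℝ, 0 ≤ t → N t ≤ ρ * Real.exp (-(ε * t) / (2 * α₂)) := by
    intro t ht
    set E : ℝ := Real.exp (-(ε * t) / (2 * α₂)) with hEdef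
    have hEpos : 0 < E := Real.exp_pos _
    have hE2 : E ^ 2 = Real.exp (-(k * t)) := by
      rw [hEdef, sq, ← Real.exp_add]
      congr 1
      rw [hkdef]; field_simp; ring
    have h1 : α₁ * N t ^ 2 ≤ α₁ * ρ ^ 2 * E ^ 2 := by
      calc α₁ * N t ^ 2 ≤ V t := hVlow t
        _ ≤ V 0 * Real.exp (-(k * t)) := hVbound t ht
        _ ≤ α₁ * ρ ^ 2 * Real.exp (-(k * t)) :=
            mul_le_mul_of_nonneg_right hρsq (Real.exp_pos _).le
        _ = α₁ * ρ ^ 2 * E ^ 2 := by rw [hE2]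
    have h2 : N t ^ 2 ≤ (ρ * E) ^ 2 := by
      have := (mul_le_mul_iff_right₀ hα₁).mp (by nlinarith [h1] : α₁ * N t ^ 2 ≤ α₁ * (ρ * E) ^ 2)
      exact this
    by_contra hco
    push_neg at hco
    nlinarith [mul_pos (sub_pos.mpr hco) (by nlinarith [hN0 t, mul_pos hρpos hEpos] : (0:ℝ) < N t + ρ * E)]
  constructor
  · exact ⟨ρ, hρpos, ε, ⟨hεpos, hεlt⟩, hmain⟩
  · rw [tendsto_pi_nhds]
    intro i
    have hb : Filter.Tendsto (fun t : ℝ => ρ * Real.exp (-(ε * t) / (2 * α₂))) Filter.atTop (nhds 0) := by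
      have h1 : Filter.Tendsto (fun t : ℝ => -(ε * t) / (2 * α₂)) Filter.atTop Filter.atBot := by
        have : (fun t : ℝ => -(ε * t) / (2 * α₂)) = fun t : ℝ => (-ε / (2 * α₂)) * t := by
          funext t; ring
        rw [this]
        exact (Filter.tendsto_const_mul_atBot_of_neg (div_neg_of_neg_of_pos (neg_lt_zero.mpr hεpos) (by positivity))).mpr Filter.tendsto_id
      have h2 := Real.tendsto_exp_atBot.comp h1
      simpa using h2.const_mul ρ
    have h3 : ∀ᶠ t : ℝ in Filter.atTop, ‖e t i‖ ≤ ρ * Real.exp (-(ε * t) / (2 * α₂)) := by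
      filter_upwards [Filter.eventually_ge_atTop (0:ℝ)] with t ht
      calc ‖e t i‖ = |e t i| := rfl
        _ ≤ N t := abs_le_enorm' (e t) i
        _ ≤ ρ * Real.exp (-(ε * t) / (2 * α₂)) := hmain t ht
    simpa using squeeze_zero_norm' h3 hb
end

section
/- (Global observer convergence) Let N be linear and energy preserving, let B_r(d) be invariant for ẋ = Ax + N(x)x with x₀ ∈ B_r(d), and let Y ⊇ B_r(d). Suppose P is symmetric positive definite with eᵀP N(e)e = 0 for all e ∈ ℝⁿ, and R ∈ ℝ^{n×p} satisfies P A_y + A_yᵀ P + RC + CᵀRᵀ ≺ 0 for all y ∈ Y. Then with L := P⁻¹R, the observer ẋ̂ = Ax̂ + N(x̂)x̂ − L(Cx − Cx̂) satisfies e(t) = x(t) − x̂(t) → 0 as t → ∞ for every initial condition x̂₀ ∈ ℝⁿ. -/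
open Matrix

/-- Euclidean norm on `Fin n → ℝ`. -/
noncomputable def euclNorm {n : ℕ} (v : Fin n → ℝ) : ℝ := Real.sqrt (∑ i, v i ^ 2)

theorem stmt14_hasDerivAt_dot {n : ℕ} {f g : ℝ → Fin n → ℝ} {f' g' : Fin n → ℝ} {t : ℝ}
    (hf : HasDerivAt f f' t) (hg : HasDerivAt g g' t) :
    HasDerivAt (fun s => f s ⬝ᵥ g s) (f' ⬝ᵥ g t + f t ⬝ᵥ g') t := by
  have h1 := hasDerivAt_pi.1 hf
  have h2 := hasDerivAt_pi.1 hg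
  simpa [dotProduct, Finset.sum_add_distrib] using
    HasDerivAt.fun_sum (fun i _ => ((h1 i).mul (h2 i)))

theorem stmt14_hasDerivAt_mulVec {n m : ℕ} (M : Matrix (Fin m) (Fin n) ℝ) {g : ℝ → Fin n → ℝ}
    {g' : Fin n → ℝ} {t : ℝ} (hg : HasDerivAt g g' t) :
    HasDerivAt (fun s => M.mulVec (g s)) (M.mulVec g') t := by
  rw [hasDerivAt_pi]
  intro i
  simpa [mulVec, dotProduct] using
    HasDerivAt.fun_sum (fun j _ => ((hasDerivAt_pi.1 hg) j).const_mul (M i j))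

theorem stmt14_norm_le_enorm {n : ℕ} (v : Fin n → ℝ) : ‖v‖ ≤ euclNorm v := by
  have h0 : 0 ≤ euclNorm v := Real.sqrt_nonneg _
  rw [pi_norm_le_iff_of_nonneg h0]
  intro i
  rw [Real.norm_eq_abs, ← Real.sqrt_sq_eq_abs]
  apply Real.sqrt_le_sqrt
  exact Finset.single_le_sum (fun j _ => sq_nonneg (v j)) (Finset.mem_univ i)

theorem stmt14_enorm_nonneg {n : ℕ} (v : Fin n → ℝ) : 0 ≤ euclNorm v := Real.sqrt_nonneg _

theorem stmt14_continuous_enorm {n : ℕ} : Continuous fun v : Fin n → ℝ => euclNorm v := by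
  unfold euclNorm
  exact Real.continuous_sqrt.comp
    (continuous_finset_sum _ fun i _ => ((continuous_apply i).pow 2))

/-- Global observer convergence: if the state stays in the invariant ball
`B_r(d) ⊆ Y`, `P ≻ 0` is symmetric with `eᵀPN(e)e = 0` for all `e`, and the strict
LMI `P A_y + A_yᵀ P + RC + CᵀRᵀ ≺ 0` holds for all `y ∈ Y`, then with `L = P⁻¹R`
the observer error converges to `0` for every observer initial condition. -/
theorem stmt14 {n p : ℕ}
    (A : Matrix (Fin n) (Fin n) ℝ) (C : Matrix (Fin p) (Fin n) ℝ)
    (N : (Fin n → ℝ) →ₗ[ℝ] Matrix (Fin n) (Fin n) ℝ)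
    (hN : ∀ x : Fin n → ℝ, x ⬝ᵥ (N x).mulVec x = 0)
    (d : Fin n → ℝ) (r : ℝ) (Y : Set (Fin n → ℝ))
    (hYball : {v : Fin n → ℝ | euclNorm (v - d) ≤ r} ⊆ Y)
    (P : Matrix (Fin n) (Fin n) ℝ) (hPsymm : P.IsSymm)
    (hPpos : ∀ v : Fin n → ℝ, v ≠ 0 → 0 < v ⬝ᵥ P.mulVec v)
    (hPN : ∀ e : Fin n → ℝ, e ⬝ᵥ P.mulVec ((N e).mulVec e) = 0)
    (R : Matrix (Fin n) (Fin p) ℝ)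
    (hLMI : ∀ y ∈ Y, ∀ v : Fin n → ℝ, v ≠ 0 →
      2 * (v ⬝ᵥ P.mulVec (A.mulVec v + (N v).mulVec y + (N y).mulVec v))
        + 2 * (v ⬝ᵥ R.mulVec (C.mulVec v)) < 0)
    (L : Matrix (Fin n) (Fin p) ℝ) (hL : L = P⁻¹ * R)
    (x xh : ℝ → Fin n → ℝ)
    (hx : ∀ t : ℝ, HasDerivAt x (A.mulVec (x t) + (N (x t)).mulVec (x t)) t)
    (hxball : ∀ t : ℝ, 0 ≤ t → euclNorm (x t - d) ≤ r)
    (hxh : ∀ t : ℝ, HasDerivAt xh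
      (A.mulVec (xh t) + (N (xh t)).mulVec (xh t)
        - L.mulVec (C.mulVec (x t) - C.mulVec (xh t))) t) :
    Filter.Tendsto (fun t => x t - xh t) Filter.atTop (nhds 0) := by
  classical
  rcases Nat.eq_zero_or_pos n with hn | hn
  · subst hn
    have hsub : Subsingleton (Fin 0 → ℝ) := by
      refine ⟨fun a b => funext fun i => Fin.elim0 i⟩
    have : (fun t => x t - xh t) = fun _ => (0 : Fin 0 → ℝ) :=
      funext fun t => @Subsingleton.elim _ hsub _ _
    rw [this]
    exact tendsto_const_nhds
  haveI : Nonempty (Fin n) := ⟨⟨0, hn⟩⟩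
  -- notation
  set e : ℝ → Fin n → ℝ := fun t => x t - xh t with he
  set V : (Fin n → ℝ) → ℝ := fun v => v ⬝ᵥ P.mulVec v with hV
  set W : (Fin n → ℝ) → (Fin n → ℝ) → ℝ := fun v y =>
    2 * (v ⬝ᵥ P.mulVec (A.mulVec v + (N v).mulVec y + (N y).mulVec v))
      + 2 * (v ⬝ᵥ R.mulVec (C.mulVec v)) with hW
  set g : ℝ → ℝ := fun t => V (e t) with hg
  -- basic facts about P
  have hsym : ∀ u w : Fin n → ℝ, u ⬝ᵥ P.mulVec w = w ⬝ᵥ P.mulVec u := by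
    intro u w
    rw [dotProduct_mulVec, ← mulVec_transpose, hPsymm.eq, dotProduct_comm]
  have hPLR : P * L = R := by
    have hherm : P.IsHermitian := by
      have h := hPsymm.eq
      show Pᴴ = P
      ext i j
      simp only [Matrix.conjTranspose_apply, star_trivial]
      conv_lhs => rw [← h]
      exact Matrix.transpose_apply ..
    have hPD : P.PosDef := Matrix.posDef_iff_dotProduct_mulVec.2 ⟨hherm, fun v hv => by simpa using hPpos v hv⟩
    have hu : IsUnit P.det := hPD.det_pos.ne'.isUnit
    rw [hL, ← Matrix.mul_assoc, Matrix.mul_nonsing_inv P hu, Matrix.one_mul]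
  -- V nonneg
  have hV0 : ∀ v, 0 ≤ V v := by
    intro v
    by_cases hv : v = 0
    · subst hv; simp [hV]
    · exact (hPpos v hv).le
  -- continuity of V
  have hVcont : Continuous V := by
    exact continuous_id.dotProduct (continuous_const.matrix_mulVec continuous_id)
  -- quadratic lower bound for V
  obtain ⟨m, hm, hVm⟩ : ∃ m > 0, ∀ v : Fin n → ℝ, m * ‖v‖ ^ 2 ≤ V v := by
    have hSne : (Metric.sphere (0 : Fin n → ℝ) 1).Nonempty :=
      NormedSpace.sphere_nonempty.2 zero_le_one
    obtain ⟨u0, hu0S, hmin⟩ :=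
      (isCompact_sphere (0 : Fin n → ℝ) 1).exists_isMinOn hSne hVcont.continuousOn
    have hu0n : ‖u0‖ = 1 := by simpa using mem_sphere_zero_iff_norm.1 hu0S
    have hu0 : u0 ≠ 0 := by
      intro h; rw [h] at hu0n; simp at hu0n
    refine ⟨V u0, hPpos u0 hu0, fun v => ?_⟩
    by_cases hv : v = 0
    · subst hv; simp [hV]
    · have hnv : 0 < ‖v‖ := norm_pos_iff.2 hv
      set u : Fin n → ℝ := ‖v‖⁻¹ • v with hu
      have hun : ‖u‖ = 1 := by
        rw [hu, norm_smul, norm_inv, norm_norm, inv_mul_cancel₀ hnv.ne']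
      have hveq : v = ‖v‖ • u := by
        rw [hu, smul_smul, mul_inv_cancel₀ hnv.ne', one_smul]
      have hhom : V v = ‖v‖ ^ 2 * V u := by
        conv_lhs => rw [hveq]
        show (‖v‖ • u) ⬝ᵥ P.mulVec (‖v‖ • u) = _
        rw [Matrix.mulVec_smul, smul_dotProduct, dotProduct_smul]
        simp [hV, smul_eq_mul]; ring
      have hle : V u0 ≤ V u := hmin (mem_sphere_zero_iff_norm.2 hun)
      rw [hhom]
      have := mul_le_mul_of_nonneg_left hle (sq_nonneg ‖v‖)
      linarith
  -- the invariant ball is compact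
  set B : Set (Fin n → ℝ) := {v | euclNorm (v - d) ≤ r} with hB
  have hBcomp : IsCompact B := by
    have hcl : IsClosed B :=
      isClosed_le ((stmt14_continuous_enorm).comp (continuous_id.sub continuous_const))
        continuous_const
    have hbd : Bornology.IsBounded B := by
      apply (Metric.isBounded_closedBall (x := d) (r := r)).subset
      intro v hv
      rw [Metric.mem_closedBall, dist_eq_norm]
      exact le_trans (stmt14_norm_le_enorm _) hv
    exact Metric.isCompact_of_isClosed_isBounded hcl hbd
  have hxB : ∀ t : ℝ, 0 ≤ t → x t ∈ B := fun t ht => hxball t ht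
  -- derivative of the error
  have heD : ∀ t : ℝ, HasDerivAt e
      (A.mulVec (e t) + (N (e t)).mulVec (x t) + (N (x t)).mulVec (e t)
        - (N (e t)).mulVec (e t) + L.mulVec (C.mulVec (e t))) t := by
    intro t
    have h := (hx t).sub (hxh t)
    have hident : (A.mulVec (x t) + (N (x t)).mulVec (x t)) -
        (A.mulVec (xh t) + (N (xh t)).mulVec (xh t)
          - L.mulVec (C.mulVec (x t) - C.mulVec (xh t))) =
        A.mulVec (e t) + (N (e t)).mulVec (x t) + (N (x t)).mulVec (e t)
          - (N (e t)).mulVec (e t) + L.mulVec (C.mulVec (e t)) := by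
      have : e t = x t - xh t := rfl
      rw [this]
      simp only [map_sub, Matrix.sub_mulVec, Matrix.mulVec_sub]
      abel
    rw [← hident]
    exact h
  -- derivative of the Lyapunov function along trajectories
  have hgD : ∀ t : ℝ, HasDerivAt g (W (e t) (x t)) t := by
    intro t
    have h := stmt14_hasDerivAt_dot (heD t) (stmt14_hasDerivAt_mulVec P (heD t))
    have hval : ((A.mulVec (e t) + (N (e t)).mulVec (x t) + (N (x t)).mulVec (e t)
          - (N (e t)).mulVec (e t) + L.mulVec (C.mulVec (e t))) ⬝ᵥ P.mulVec (e t))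
        + (e t ⬝ᵥ P.mulVec (A.mulVec (e t) + (N (e t)).mulVec (x t) + (N (x t)).mulVec (e t)
          - (N (e t)).mulVec (e t) + L.mulVec (C.mulVec (e t)))) = W (e t) (x t) := by
      rw [hsym]
      rw [← two_mul]
      have h1 : P.mulVec (L.mulVec (C.mulVec (e t))) = R.mulVec (C.mulVec (e t)) := by
        rw [Matrix.mulVec_mulVec, hPLR]
      simp only [hW, Matrix.mulVec_add, Matrix.mulVec_sub, dotProduct_add, dotProduct_sub,
        hPN, h1]
      ring
    rw [← hval]
    exact h
  have hgcont : Continuous g :=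
    continuous_iff_continuousAt.2 fun t => (hgD t).continuousAt
  -- continuity of W
  have hNc : Continuous fun v : Fin n → ℝ => N v := N.continuous_of_finiteDimensional
  have hWc : Continuous fun q : (Fin n → ℝ) × (Fin n → ℝ) => W q.1 q.2 := by
    apply Continuous.add
    · apply continuous_const.mul
      apply Continuous.dotProduct continuous_fst
      apply Continuous.matrix_mulVec continuous_const
      apply Continuous.add
      apply Continuous.add
      · exact continuous_const.matrix_mulVec continuous_fst
      · exact (hNc.comp continuous_fst).matrix_mulVec continuous_snd
      · exact (hNc.comp continuous_snd).matrix_mulVec continuous_fst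
    · exact continuous_const.mul (continuous_fst.dotProduct
        (continuous_const.matrix_mulVec (continuous_const.matrix_mulVec continuous_fst)))
  -- g is antitone on [0, ∞)
  have hWle : ∀ t : ℝ, 0 ≤ t → W (e t) (x t) ≤ 0 := by
    intro t ht
    by_cases hez : e t = 0
    · rw [hez]; simp [hW]
    · exact (hLMI (x t) (hYball (hxB t ht)) (e t) hez).le
  have hganti : AntitoneOn g (Set.Ici 0) := by
    refine antitoneOn_of_deriv_nonpos (convex_Ici 0) hgcont.continuousOn
      (fun t _ => (hgD t).differentiableAt.differentiableWithinAt) (fun t ht => ?_)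
    rw [interior_Ici] at ht
    rw [(hgD t).deriv]
    exact hWle t (le_of_lt ht)
  -- g tends to 0
  have hgto : Filter.Tendsto g Filter.atTop (nhds 0) := by
    rw [Metric.tendsto_atTop]
    intro ε hε
    have hT : ∃ T : ℝ, 0 ≤ T ∧ g T < ε := by
      by_contra hcon
      push_neg at hcon
      set K : Set (Fin n → ℝ) := {v | ε ≤ V v ∧ V v ≤ g 0} with hK
      have hKcomp : IsCompact K := by
        have hcl : IsClosed K :=
          (isClosed_le continuous_const hVcont).inter (isClosed_le hVcont continuous_const)
        have hbd : Bornology.IsBounded K := by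
          apply (Metric.isBounded_closedBall (x := (0 : Fin n → ℝ))
            (r := Real.sqrt (g 0 / m))).subset
          intro v hv
          rw [Metric.mem_closedBall, dist_zero_right]
          have h1 : m * ‖v‖ ^ 2 ≤ g 0 := le_trans (hVm v) hv.2
          have h2 : ‖v‖ ^ 2 ≤ g 0 / m := (le_div_iff₀ hm).2 (by linarith [mul_comm m (‖v‖ ^ 2)])
          calc ‖v‖ = Real.sqrt (‖v‖ ^ 2) := (Real.sqrt_sq (norm_nonneg _)).symm
            _ ≤ _ := Real.sqrt_le_sqrt h2
        exact Metric.isCompact_of_isClosed_isBounded hcl hbd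
      have heK : ∀ t : ℝ, 0 ≤ t → e t ∈ K := by
        intro t ht
        exact ⟨hcon t ht, hganti Set.self_mem_Ici (Set.mem_Ici.2 ht) ht⟩
      have hne : (K ×ˢ B).Nonempty := ⟨(e 0, x 0), Set.mk_mem_prod (heK 0 le_rfl) (hxB 0 le_rfl)⟩
      obtain ⟨⟨v0, y0⟩, hmem, hmax⟩ :=
        (hKcomp.prod hBcomp).exists_isMaxOn hne hWc.continuousOn
      have hv0 : v0 ≠ 0 := by
        intro h0
        have h1 := hmem.1.1
        rw [h0] at h1
        simp [hV] at h1
        linarith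
      have hWneg : W v0 y0 < 0 := hLMI y0 (hYball hmem.2) v0 hv0
      set δ : ℝ := -(W v0 y0) with hδ
      have hδpos : 0 < δ := by simp [hδ]; linarith
      have hdec : ∀ t : ℝ, 0 ≤ t → g t ≤ g 0 - δ * t := by
        have hD : ∀ t : ℝ, HasDerivAt (fun s => g s + δ * s) (W (e t) (x t) + δ) t := by
          intro t
          simpa using (hgD t).fun_add ((hasDerivAt_id t).const_mul δ)
        have hanti2 : AntitoneOn (fun t => g t + δ * t) (Set.Ici 0) := by
          refine antitoneOn_of_deriv_nonpos (convex_Ici 0)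
            ((hgcont.add (continuous_const.mul continuous_id)).continuousOn)
            (fun t _ => (hD t).differentiableAt.differentiableWithinAt) (fun t ht => ?_)
          rw [interior_Ici] at ht
          rw [(hD t).deriv]
          have hle := hmax (Set.mk_mem_prod (heK t ht.le) (hxB t ht.le))
          simp only [Set.mem_setOf_eq] at hle
          simp only [hδ]
          linarith [hle]
        intro t ht
        have h1 := hanti2 Set.self_mem_Ici (Set.mem_Ici.2 ht) ht
        simp only [mul_zero, add_zero] at h1
        linarith
      have hg00 : 0 ≤ g 0 := hV0 _
      set T : ℝ := g 0 / δ + 1 with hT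
      have hT0 : 0 ≤ T := by positivity
      have hbig := hdec T hT0
      have hcalc : δ * T = g 0 + δ := by
        rw [hT]; field_simp
      have hgT0 : 0 ≤ g T := hV0 _
      linarith
    obtain ⟨T, hT0, hTε⟩ := hT
    refine ⟨T, fun t ht => ?_⟩
    have h1 : g t ≤ g T := hganti (Set.mem_Ici.2 hT0) (Set.mem_Ici.2 (le_trans hT0 ht)) ht
    rw [Real.dist_eq, sub_zero, abs_of_nonneg (hV0 _)]
    exact lt_of_le_of_lt h1 hTε
  -- conclude
  have hnorm : Filter.Tendsto (fun t => ‖e t‖) Filter.atTop (nhds 0) := by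
    have hsq : Filter.Tendsto (fun t => Real.sqrt (g t / m)) Filter.atTop (nhds 0) := by
      have h1 := hgto.div_const m
      rw [zero_div] at h1
      have h2 := (Real.continuous_sqrt.tendsto 0).comp h1
      simpa [Function.comp_def] using h2
    apply squeeze_zero (fun t => norm_nonneg _) (fun t => ?_) hsq
    have h1 : m * ‖e t‖ ^ 2 ≤ g t := hVm (e t)
    have h2 : ‖e t‖ ^ 2 ≤ g t / m := (le_div_iff₀ hm).2 (by linarith [mul_comm m (‖e t‖ ^ 2)])
    calc ‖e t‖ = Real.sqrt (‖e t‖ ^ 2) := (Real.sqrt_sq (norm_nonneg _)).symm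
      _ ≤ _ := Real.sqrt_le_sqrt h2
  exact tendsto_zero_iff_norm_tendsto_zero.mpr hnorm
end
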